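/- Let $p$ be a prime with $p \ge 7$. Then $\sum_{j=1}^{p-1} \frac{H_j H_j^{(2)}}{j^{2}} \equiv -\frac{1}{2} B_{p-5} \pmod p$, i.e., the numerator of $\sum_{j=1}^{p-1} \frac{H_j H_j^{(2)}}{j^{2}} + \frac{1}{2}B_{p-5}$ (as a rational number in lowest terms) is divisible by $p$. -/

import Mathlib

open Finset

/-- Auxiliary: multiple harmonic sum with exponent list given in *reverse* order
(head is the last exponent `s_k`), via the standard recurrence. -/
def mhsAux : List ℕ → ℕ → ℚ
  | [], _ => 1
  | s :: rest, n => ∑ m ∈ Finset.Icc 1 n, mhsAux rest (m - 1) / (m : ℚ) ^ s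

/-- Multiple harmonic sum `H(s_1,…,s_k; n) = ∑_{1 ≤ j_1 < ⋯ < j_k ≤ n} 1/(j_1^{s_1}⋯j_k^{s_k})`. -/
def mhs (l : List ℕ) (n : ℕ) : ℚ := mhsAux l.reverse n

/-- Generalized harmonic number `H_n^{(s)} = ∑_{m=1}^n 1/m^s`. -/
def hsum (s n : ℕ) : ℚ := ∑ m ∈ Finset.Icc 1 n, 1 / (m : ℚ) ^ s

section Solution

variable {p : ℕ} [Fact p.Prime]




/-- `Ok p q x`: the rational `q` is `p`-integral and reduces to `x` mod `p`. -/
def Ok (p : ℕ) [Fact p.Prime] (q : ℚ) (x : ZMod p) : Prop :=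
  ¬ (p:ℤ) ∣ (q.den : ℤ) ∧ ((q.num : ZMod p) / ((q.den : ℕ) : ZMod p) = x)

lemma Ok.rep {q : ℚ} {a b : ℤ} (hb : ¬ (p:ℤ) ∣ b) (h : q = (a : ℚ) / (b : ℚ)) :
    Ok p q ((a : ZMod p) / (b : ZMod p)) := by
  have hb0 : b ≠ 0 := by rintro rfl; exact hb (dvd_zero _)
  have hden : ((q.den : ℤ)) ∣ b := by
    rw [h, ← Rat.divInt_eq_div]; exact Rat.den_dvd a b
  have hgood : ¬ (p:ℤ) ∣ (q.den : ℤ) := fun hd => hb (hd.trans hden)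
  have hcross : q.num * b = a * (q.den : ℤ) := by
    have hq0 : ((q.den : ℚ)) ≠ 0 := by exact_mod_cast q.den_ne_zero
    have hb0' : ((b : ℚ)) ≠ 0 := by exact_mod_cast hb0
    have h1 : (q.num : ℚ) / (q.den : ℚ) = (a : ℚ) / (b : ℚ) := by
      rw [Rat.num_div_den q]; exact h
    have h2 : (q.num : ℚ) * b = a * (q.den : ℚ) := by
      field_simp at h1; linarith [h1]
    exact_mod_cast h2
  refine ⟨hgood, ?_⟩
  have hdz : ((q.den : ℕ) : ZMod p) ≠ 0 := by
    intro h0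
    rw [ZMod.natCast_eq_zero_iff] at h0
    exact hgood (by exact_mod_cast Int.natCast_dvd_natCast.mpr h0)
  have hbz : ((b : ZMod p)) ≠ 0 := by
    intro h0
    rw [ZMod.intCast_zmod_eq_zero_iff_dvd] at h0
    exact hb h0
  rw [div_eq_div_iff hdz hbz]
  have := congrArg (fun z : ℤ => (z : ZMod p)) hcross
  push_cast at this ⊢
  linear_combination this

lemma Ok.den_ne (q : ℚ) (x : ZMod p) (h : Ok p q x) : ((q.den : ℚ)) ≠ 0 := by
  exact_mod_cast q.den_ne_zero

lemma Ok.not_dvd_den {q : ℚ} {x : ZMod p} (h : Ok p q x) : ¬ (p:ℤ) ∣ (q.den : ℤ) := h.1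

lemma Ok.intCast (n : ℤ) : Ok p (n : ℚ) (n : ZMod p) := by
  have hp : p.Prime := Fact.out
  have h1 : ¬ (p : ℤ) ∣ (1 : ℤ) := by
    intro h; have h2 := Int.le_of_dvd one_pos h; have h3 := hp.two_le; omega
  have := Ok.rep (p := p) (q := (n:ℚ)) (a := n) (b := 1) h1 (by norm_num)
  simpa using this

lemma Ok.natCast (n : ℕ) : Ok p (n : ℚ) (n : ZMod p) := by
  have := Ok.intCast (p := p) (n : ℤ); push_cast at this; exact this

lemma Ok.zero : Ok p 0 0 := by simpa using Ok.natCast (p := p) 0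

lemma Ok.one : Ok p 1 1 := by simpa using Ok.natCast (p := p) 1

lemma Ok.add {q r : ℚ} {x y : ZMod p} (hq : Ok p q x) (hr : Ok p r y) :
    Ok p (q + r) (x + y) := by
  have hdq : ((q.den : ℚ)) ≠ 0 := by exact_mod_cast q.den_ne_zero
  have hdr : ((r.den : ℚ)) ≠ 0 := by exact_mod_cast r.den_ne_zero
  have hp : p.Prime := Fact.out
  have hb : ¬ (p:ℤ) ∣ ((q.den : ℤ) * (r.den : ℤ)) := by
    intro h
    rcases (Int.Prime.dvd_mul' (by exact_mod_cast hp) h) with h' | h'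
    · exact hq.1 h'
    · exact hr.1 h'
  have hrep : q + r = (((q.num * r.den + r.num * q.den : ℤ)) : ℚ) /
      (((q.den : ℤ) * (r.den : ℤ) : ℤ) : ℚ) := by
    push_cast
    nth_rewrite 1 [← Rat.num_div_den q, ← Rat.num_div_den r]
    field_simp
  have h := Ok.rep (p := p) hb hrep
  have hdqz : ((q.den : ℕ) : ZMod p) ≠ 0 := by
    intro h0; rw [ZMod.natCast_eq_zero_iff] at h0
    exact hq.1 (by exact_mod_cast Int.natCast_dvd_natCast.mpr h0)
  have hdrz : ((r.den : ℕ) : ZMod p) ≠ 0 := by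
    intro h0; rw [ZMod.natCast_eq_zero_iff] at h0
    exact hr.1 (by exact_mod_cast Int.natCast_dvd_natCast.mpr h0)
  refine ⟨h.1, ?_⟩
  rw [h.2, ← hq.2, ← hr.2]
  push_cast
  field_simp

lemma Ok.mul {q r : ℚ} {x y : ZMod p} (hq : Ok p q x) (hr : Ok p r y) :
    Ok p (q * r) (x * y) := by
  have hdq : ((q.den : ℚ)) ≠ 0 := by exact_mod_cast q.den_ne_zero
  have hdr : ((r.den : ℚ)) ≠ 0 := by exact_mod_cast r.den_ne_zero
  have hp : p.Prime := Fact.out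
  have hb : ¬ (p:ℤ) ∣ ((q.den : ℤ) * (r.den : ℤ)) := by
    intro h
    rcases (Int.Prime.dvd_mul' (by exact_mod_cast hp) h) with h' | h'
    · exact hq.1 h'
    · exact hr.1 h'
  have hrep : q * r = (((q.num * r.num : ℤ)) : ℚ) /
      (((q.den : ℤ) * (r.den : ℤ) : ℤ) : ℚ) := by
    push_cast
    nth_rewrite 1 [← Rat.num_div_den q, ← Rat.num_div_den r]
    field_simp
  have h := Ok.rep (p := p) hb hrep
  have hdqz : ((q.den : ℕ) : ZMod p) ≠ 0 := by
    intro h0; rw [ZMod.natCast_eq_zero_iff] at h0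
    exact hq.1 (by exact_mod_cast Int.natCast_dvd_natCast.mpr h0)
  have hdrz : ((r.den : ℕ) : ZMod p) ≠ 0 := by
    intro h0; rw [ZMod.natCast_eq_zero_iff] at h0
    exact hr.1 (by exact_mod_cast Int.natCast_dvd_natCast.mpr h0)
  refine ⟨h.1, ?_⟩
  rw [h.2, ← hq.2, ← hr.2]
  push_cast
  field_simp

lemma Ok.neg {q : ℚ} {x : ZMod p} (hq : Ok p q x) : Ok p (-q) (-x) := by
  have := (Ok.intCast (p := p) (-1)).mul hq
  simpa using this

lemma Ok.sub {q r : ℚ} {x y : ZMod p} (hq : Ok p q x) (hr : Ok p r y) :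
    Ok p (q - r) (x - y) := by
  have := hq.add hr.neg; simpa [sub_eq_add_neg] using this

lemma Ok.sum {ι : Type*} {s : Finset ι} {f : ι → ℚ} {g : ι → ZMod p}
    (h : ∀ i ∈ s, Ok p (f i) (g i)) :
    Ok p (∑ i ∈ s, f i) (∑ i ∈ s, g i) := by
  classical
  induction s using Finset.induction_on with
  | empty => simpa using Ok.zero
  | @insert a s' hx ih =>
    rw [Finset.sum_insert hx, Finset.sum_insert hx]
    exact (h a (Finset.mem_insert_self a s')).add
      (ih fun i hi => h i (Finset.mem_insert_of_mem hi))

lemma Ok.dvd_num {q : ℚ} (h : Ok p q 0) : (p : ℤ) ∣ q.num := by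
  have hdz : ((q.den : ℕ) : ZMod p) ≠ 0 := by
    intro h0; rw [ZMod.natCast_eq_zero_iff] at h0
    exact h.1 (by exact_mod_cast Int.natCast_dvd_natCast.mpr h0)
  have h2 := h.2
  rw [div_eq_zero_iff] at h2
  rcases h2 with h2 | h2
  · rwa [ZMod.intCast_zmod_eq_zero_iff_dvd] at h2
  · exact absurd h2 hdz

/-- One over a natural number not divisible by `p`. -/
lemma Ok.one_div_nat {b : ℕ} (hb : ¬ p ∣ b) :
    Ok p (1 / (b : ℚ)) (((b : ZMod p))⁻¹) := by
  have h1 : ¬ (p:ℤ) ∣ (b : ℤ) := by exact_mod_cast fun h => hb (by exact_mod_cast h)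
  have := Ok.rep (p := p) (q := 1 / (b:ℚ)) (a := 1) (b := (b:ℤ)) h1 (by push_cast; ring)
  simpa [one_div] using this





lemma sum_range_castZMod {M : Type*} [AddCommMonoid M] (f : ZMod p → M) :
    ∑ j ∈ range p, f ((j : ZMod p)) = ∑ x : ZMod p, f x := by
  have hp : p.Prime := Fact.out
  haveI : NeZero p := ⟨hp.ne_zero⟩
  refine Finset.sum_nbij' (i := fun j => ((j : ZMod p))) (j := fun x => x.val)
    ?_ ?_ ?_ ?_ ?_
  · intro a ha; exact Finset.mem_univ _
  · intro a ha; exact Finset.mem_range.mpr (ZMod.val_lt a)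
  · intro a ha; exact ZMod.val_natCast_of_lt (Finset.mem_range.mp ha)
  · intro a ha; exact ZMod.natCast_zmod_val a
  · intro a ha; rfl

lemma sum_pow_ZMod (e : ℕ) (he : e ≠ 0) :
    ∑ j ∈ Icc 1 (p-1), ((j : ZMod p))^e = if (p-1) ∣ e then (-1 : ZMod p) else 0 := by
  have hp : p.Prime := Fact.out
  haveI : NeZero p := ⟨hp.ne_zero⟩
  have h2 := hp.two_le
  have h1 : Icc 1 (p-1) = Ico 1 p := by
    rw [← Finset.Ico_add_one_right_eq_Icc]; congr 1; omega
  have h0 : ∑ j ∈ range p, ((j : ZMod p))^e = ∑ j ∈ Ico 1 p, ((j : ZMod p))^e := by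
    rw [Finset.range_eq_Ico, Finset.sum_eq_sum_Ico_succ_bot (by omega : 0 < p)]
    simp [zero_pow he]
  have h3 : ∑ j ∈ range p, ((j : ZMod p))^e = ∑ x : ZMod p, x^e :=
    sum_range_castZMod (fun x => x^e)
  rw [h1, ← h0, h3]
  -- now sum over the field
  classical
  have hcard : Fintype.card (ZMod p) = p := ZMod.card p
  calc ∑ x : ZMod p, x ^ e
      = ∑ x ∈ (univ : Finset (ZMod p)) \ {0}, x ^ e := by
        rw [← Finset.sum_sdiff (Finset.subset_univ ({0} : Finset (ZMod p))),
          Finset.sum_singleton, zero_pow he, add_zero]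
    _ = ∑ x : (ZMod p)ˣ, ((x : ZMod p)) ^ e := by
        let φ : (ZMod p)ˣ ↪ ZMod p := ⟨fun x => x, Units.val_injective⟩
        have himg : (univ : Finset (ZMod p)ˣ).map φ = univ \ {0} := by
          ext x
          simp only [mem_map, mem_univ, Function.Embedding.coeFn_mk, true_and, mem_sdiff,
            mem_singleton, φ]
          exact isUnit_iff_ne_zero
        rw [← himg, Finset.sum_map]
        rfl
    _ = if p - 1 ∣ e then (-1 : ZMod p) else 0 := by
        have := FiniteField.sum_pow_units (ZMod p) e
        rw [hcard] at this
        simp only [this]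





def phiQ (p : ℕ) [Fact p.Prime] (q : ℚ) : ZMod p :=
  (q.num : ZMod p) / ((q.den : ℕ) : ZMod p)

lemma Ok.phiQ_eq {q : ℚ} {x : ZMod p} (h : Ok p q x) : phiQ p q = x := h.2

lemma Ok.self {q : ℚ} {x : ZMod p} (h : Ok p q x) : Ok p q (phiQ p q) := ⟨h.1, rfl⟩

lemma Ok.eq {q : ℚ} {x y : ZMod p} (h1 : Ok p q x) (h2 : Ok p q y) : x = y := by
  rw [← h1.2, ← h2.2]


/-- mod-p image of `bernoulli'`. -/
noncomputable def bb (p : ℕ) [Fact p.Prime] (i : ℕ) : ZMod p := phiQ p (bernoulli' i)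

lemma bernoulli'_ok : ∀ m : ℕ, m ≤ p - 2 → Ok p (bernoulli' m) (bb p m) := by
  have hp : p.Prime := Fact.out
  have h2 := hp.two_le
  intro m
  induction m using Nat.strong_induction_on with
  | _ m ih =>
    intro hm
    rcases Nat.eq_zero_or_pos m with rfl | hm1
    · have : Ok p (bernoulli' 0) (1 : ZMod p) := by
        rw [bernoulli'_zero]
        simpa using Ok.natCast (p := p) 1
      exact this.self
    -- set up Faulhaber with n = p
    set N : ℕ := ∑ k ∈ Ico 1 (p+1), k^m with hN
    have hfaul := sum_Ico_pow p m
    have hNQ : ((N : ℚ)) = ∑ k ∈ Ico 1 (p+1), ((k:ℚ))^m := by push_cast [hN]; ring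
    -- p ∣ N
    have hNdvd : p ∣ N := by
      rw [← ZMod.natCast_eq_zero_iff]
      have : ((N : ZMod p)) = ∑ k ∈ Ico 1 (p+1), ((k : ZMod p))^m := by push_cast [hN]; ring
      have hIc : Ico 1 p = Icc 1 (p-1) := by rw [← Finset.Ico_add_one_right_eq_Icc]; congr 1; omega
      have hnd : ¬ (p-1) ∣ m := fun hd => absurd (Nat.le_of_dvd hm1 hd) (by omega)
      rw [this, Finset.sum_Ico_succ_top (by omega : 1 ≤ p), hIc,
        sum_pow_ZMod m (by omega), if_neg hnd, ZMod.natCast_self,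
        zero_pow (by omega : m ≠ 0), add_zero]
    obtain ⟨N', hN'⟩ := hNdvd
    -- the division-free identity
    have hp0 : ((p:ℚ)) ≠ 0 := by positivity
    have key : bernoulli' m = ((N' : ℕ):ℚ) - ∑ i ∈ range m,
        bernoulli' i * (((m+1).choose i : ℕ):ℚ) * ((p:ℚ))^(m-i) * (1 / ((m+1 : ℕ):ℚ)) := by
      have hsplit : ((N:ℚ)) = (∑ i ∈ range m,
          bernoulli' i * (((m+1).choose i : ℕ):ℚ) * ((p:ℚ))^(m-i) * (1/((m+1:ℕ):ℚ))) * p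
          + bernoulli' m * p := by
        rw [hNQ, hfaul, Finset.sum_range_succ]
        congr 1
        · rw [Finset.sum_mul]
          refine Finset.sum_congr rfl fun i hi => ?_
          have hi' : i < m := Finset.mem_range.mp hi
          rw [show m + 1 - i = (m - i) + 1 from by omega, pow_succ]
          have hm1Q : (((m+1:ℕ)):ℚ) ≠ 0 := by positivity
          push_cast
          field_simp
        · rw [Nat.choose_succ_self_right, Nat.succ_sub rfl.le, Nat.sub_self, pow_one]
          have hm1Q : ((m:ℚ)+1) ≠ 0 := by positivity
          push_cast
          field_simp
      have hNQ' : ((N:ℚ)) = p * N' := by rw [hN']; push_cast; ring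
      rw [hNQ'] at hsplit
      apply mul_right_cancel₀ hp0
      push_cast at hsplit ⊢
      linear_combination -hsplit
    -- goodness via Ok of the RHS
    have hnd2 : ¬ p ∣ (m+1) := fun hd => absurd (Nat.le_of_dvd (by omega) hd) (by omega)
    have okRHS : Ok p (((N' : ℕ):ℚ) - ∑ i ∈ range m,
        bernoulli' i * (((m+1).choose i : ℕ):ℚ) * ((p:ℚ))^(m-i) * (1 / ((m+1 : ℕ):ℚ)))
        (((N' : ZMod p)) - ∑ i ∈ range m,
          bb p i * (((m+1).choose i : ℕ) : ZMod p) * ((p : ZMod p))^(m-i)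
            * (((m+1 : ℕ) : ZMod p))⁻¹) := by
      refine Ok.sub (Ok.natCast N') (Ok.sum fun i hi => ?_)
      have hi' : i < m := Finset.mem_range.mp hi
      have okb := ih i hi' (by omega)
      have okc := Ok.natCast (p := p) ((m+1).choose i)
      have okp : Ok p (((p:ℚ))^(m-i)) (((p:ZMod p))^(m-i)) := by
        have := Ok.natCast (p := p) (p^(m-i)); push_cast at this; exact this
      exact Ok.mul (Ok.mul (Ok.mul okb okc) okp) (Ok.one_div_nat hnd2)
    rw [← key] at okRHS
    exact okRHS.self

lemma faulhaber_zmod (m n : ℕ) (hm : m ≤ p - 2) :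
    ∑ k ∈ Icc 1 n, ((k:ZMod p))^m
      = ∑ i ∈ range (m+1), bb p i * (((m+1).choose i : ℕ) : ZMod p)
          * ((n:ZMod p))^(m+1-i) * (((m+1 : ℕ) : ZMod p))⁻¹ := by
  have hp : p.Prime := Fact.out
  have h2 := hp.two_le
  have hnd2 : ¬ p ∣ (m+1) := fun hd => absurd (Nat.le_of_dvd (by omega) hd) (by omega)
  have hIcc : Icc 1 n = Ico 1 (n+1) := (Finset.Ico_add_one_right_eq_Icc 1 n).symm
  have okL : Ok p (∑ k ∈ Ico 1 (n+1), ((k:ℚ))^m) (∑ k ∈ Ico 1 (n+1), ((k:ZMod p))^m) :=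
    Ok.sum fun k _ => by have := Ok.natCast (p := p) (k^m); push_cast at this; exact this
  have hfaul : ∑ k ∈ Ico 1 (n+1), ((k:ℚ))^m = ∑ i ∈ range (m+1),
      bernoulli' i * (((m+1).choose i : ℕ):ℚ) * ((n:ℚ))^(m+1-i) * (1/((m+1:ℕ):ℚ)) := by
    rw [sum_Ico_pow]
    refine Finset.sum_congr rfl fun i _ => ?_
    push_cast
    ring
  rw [hfaul] at okL
  have okR : Ok p (∑ i ∈ range (m+1),
      bernoulli' i * (((m+1).choose i : ℕ):ℚ) * ((n:ℚ))^(m+1-i) * (1/((m+1:ℕ):ℚ)))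
      (∑ i ∈ range (m+1), bb p i * (((m+1).choose i : ℕ):ZMod p) * ((n:ZMod p))^(m+1-i)
        * (((m+1:ℕ):ZMod p))⁻¹) := by
    refine Ok.sum fun i hi => ?_
    have hi' : i ≤ m := by have := Finset.mem_range.mp hi; omega
    have okb := bernoulli'_ok i (le_trans hi' hm)
    have okc := Ok.natCast (p := p) ((m+1).choose i)
    have okn : Ok p (((n:ℚ))^(m+1-i)) (((n:ZMod p))^(m+1-i)) := by
      have := Ok.natCast (p := p) (n^(m+1-i)); push_cast at this; exact this
    exact Ok.mul (Ok.mul (Ok.mul okb okc) okn) (Ok.one_div_nat hnd2)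
  rw [hIcc]
  exact okL.eq okR

lemma cast_sub_nat (k : ℕ) (hk : k ≤ p) : (((p - k : ℕ)) : ZMod p) = - (k : ZMod p) := by
  have h1 : ((p - k : ℕ) : ZMod p) = ((p : ℕ) : ZMod p) - (k : ZMod p) := by
    rw [Nat.cast_sub hk]
  rw [h1, ZMod.natCast_self]
  ring

lemma cast_nat_ne_zero {k : ℕ} (hk1 : 0 < k) (hk2 : k < p) : ((k : ℕ) : ZMod p) ≠ 0 := by
  intro h
  rw [ZMod.natCast_eq_zero_iff] at h
  exact absurd (Nat.le_of_dvd hk1 h) (by omega)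

lemma main_zmod (h7 : 7 ≤ p) :
    ∑ j ∈ Icc 1 (p-1), ((∑ m ∈ Icc 1 j, ((((m:ZMod p))^1)⁻¹))
        * (∑ m ∈ Icc 1 j, ((((m:ZMod p))^2)⁻¹)) * ((((j:ZMod p))^2)⁻¹))
      = - ((2:ZMod p))⁻¹ * bb p (p-5) := by
  have hp : p.Prime := Fact.out
  have hinv : ∀ s m : ℕ, 1 ≤ m → m ≤ p-1 → s ≤ p-1 →
      ((((m:ZMod p))^s)⁻¹) = ((m:ZMod p))^(p-1-s) := by
    intro s m h1 h2 hs
    have hm0 : ((m : ZMod p)) ≠ 0 := cast_nat_ne_zero (by omega) (by omega)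
    refine inv_eq_of_mul_eq_one_right ?_
    rw [← pow_add, show s + (p-1-s) = p-1 from by omega,
      ZMod.pow_card_sub_one_eq_one hm0]
  -- Step 1 : inverses to powers
  have step1 : ∑ j ∈ Icc 1 (p-1), ((∑ m ∈ Icc 1 j, ((((m:ZMod p))^1)⁻¹))
        * (∑ m ∈ Icc 1 j, ((((m:ZMod p))^2)⁻¹)) * ((((j:ZMod p))^2)⁻¹))
      = ∑ j ∈ Icc 1 (p-1), ((∑ m ∈ Icc 1 j, ((m:ZMod p))^(p-2))
        * (∑ m ∈ Icc 1 j, ((m:ZMod p))^(p-3)) * (((j:ZMod p))^(p-3))) := by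
    refine Finset.sum_congr rfl fun j hj => ?_
    have hj' := Finset.mem_Icc.mp hj
    have e1 : p - 1 - 1 = p - 2 := by omega
    have e2 : p - 1 - 2 = p - 3 := by omega
    congr 1
    · congr 1
      · refine Finset.sum_congr rfl fun m hm => ?_
        have hm' := Finset.mem_Icc.mp hm
        rw [hinv 1 m (by omega) (by omega) (by omega), e1]
      · refine Finset.sum_congr rfl fun m hm => ?_
        have hm' := Finset.mem_Icc.mp hm
        rw [hinv 2 m (by omega) (by omega) (by omega), e2]
    · rw [hinv 2 j (by omega) (by omega) (by omega), e2]
  rw [step1]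
  -- Step 2 : Faulhaber
  have hF1 : ∀ j : ℕ, ∑ m ∈ Icc 1 j, ((m:ZMod p))^(p-2)
      = ∑ i ∈ range (p-1), bb p i * (((p-1).choose i : ℕ) : ZMod p)
          * ((j:ZMod p))^(p-1-i) * (((p-1 : ℕ) : ZMod p))⁻¹ := by
    intro j
    have h := faulhaber_zmod (p := p) (p-2) j (le_refl _)
    rw [show p - 2 + 1 = p - 1 from by omega] at h
    exact h
  have hF2 : ∀ j : ℕ, ∑ m ∈ Icc 1 j, ((m:ZMod p))^(p-3)
      = ∑ i ∈ range (p-2), bb p i * (((p-2).choose i : ℕ) : ZMod p)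
          * ((j:ZMod p))^(p-2-i) * (((p-2 : ℕ) : ZMod p))⁻¹ := by
    intro j
    have h := faulhaber_zmod (p := p) (p-3) j (by omega)
    rw [show p - 3 + 1 = p - 2 from by omega] at h
    exact h
  -- notation
  set c₁ : ZMod p := (((p-1 : ℕ) : ZMod p))⁻¹ with hc₁
  set c₂ : ZMod p := (((p-2 : ℕ) : ZMod p))⁻¹ with hc₂
  set u : ℕ → ZMod p := fun i => bb p i * (((p-1).choose i : ℕ) : ZMod p) with hu
  set v : ℕ → ZMod p := fun i => bb p i * (((p-2).choose i : ℕ) : ZMod p) with hv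
  set E : ℕ → ℕ → ℕ := fun i k => (p-1-i) + ((p-2-k) + (p-3)) with hE
  -- Step 3 : expand into a double sum
  have step3 : ∑ j ∈ Icc 1 (p-1), ((∑ m ∈ Icc 1 j, ((m:ZMod p))^(p-2))
        * (∑ m ∈ Icc 1 j, ((m:ZMod p))^(p-3)) * (((j:ZMod p))^(p-3)))
      = (∑ i ∈ range (p-1), ∑ k ∈ range (p-2),
          u i * v k * (∑ j ∈ Icc 1 (p-1), ((j:ZMod p))^(E i k))) * (c₁ * c₂) := by
    have hper : ∀ j : ℕ, ((∑ m ∈ Icc 1 j, ((m:ZMod p))^(p-2))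
          * (∑ m ∈ Icc 1 j, ((m:ZMod p))^(p-3)) * (((j:ZMod p))^(p-3)))
        = (∑ i ∈ range (p-1), ∑ k ∈ range (p-2),
            u i * v k * ((j:ZMod p))^(E i k)) * (c₁ * c₂) := by
      intro j
      rw [hF1 j, hF2 j, ← Finset.sum_mul, ← Finset.sum_mul]
      have hAB : (∑ i ∈ range (p-1), bb p i * (((p-1).choose i : ℕ):ZMod p) * ((j:ZMod p))^(p-1-i))
          * (∑ k ∈ range (p-2), bb p k * (((p-2).choose k : ℕ):ZMod p) * ((j:ZMod p))^(p-2-k))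
          * ((j:ZMod p))^(p-3)
          = ∑ i ∈ range (p-1), ∑ k ∈ range (p-2), u i * v k * ((j:ZMod p))^(E i k) := by
        rw [Finset.sum_mul_sum, Finset.sum_mul]
        refine Finset.sum_congr rfl fun i _ => ?_
        rw [Finset.sum_mul]
        refine Finset.sum_congr rfl fun k _ => ?_
        simp only [hE, hu, hv]
        rw [pow_add, pow_add]
        ring
      linear_combination (c₁ * c₂) * hAB
    rw [Finset.sum_congr rfl fun j _ => hper j, ← Finset.sum_mul]
    congr 1
    rw [Finset.sum_comm]
    refine Finset.sum_congr rfl fun i _ => ?_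
    rw [Finset.sum_comm]
    refine Finset.sum_congr rfl fun k _ => ?_
    rw [← Finset.mul_sum]
  rw [step3]
  -- Step 4 : evaluate the power sums and collapse
  have hPS : ∀ i k, i ∈ range (p-1) → k ∈ range (p-2) →
      (∑ j ∈ Icc 1 (p-1), ((j:ZMod p))^(E i k))
        = if (p-1) ∣ (E i k) then (-1 : ZMod p) else 0 := by
    intro i k hi hk
    exact sum_pow_ZMod (E i k) (by simp only [hE]; omega)
  have step4 : (∑ i ∈ range (p-1), ∑ k ∈ range (p-2),
        u i * v k * (∑ j ∈ Icc 1 (p-1), ((j:ZMod p))^(E i k)))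
      = u 1 * v (p-5) * (-1) + u (p-5) * v 1 * (-1) := by
    have hrw : ∀ i ∈ range (p-1), ∀ k ∈ range (p-2),
        u i * v k * (∑ j ∈ Icc 1 (p-1), ((j:ZMod p))^(E i k))
          = u i * v k * (if (p-1) ∣ (E i k) then (-1 : ZMod p) else 0) := by
      intro i hi k hk; rw [hPS i k hi hk]
    rw [Finset.sum_congr rfl fun i hi => Finset.sum_congr rfl fun k hk => hrw i hi k hk]
    rw [← Finset.sum_product']
    have hpair : ({((1:ℕ),(p-5:ℕ)), ((p-5:ℕ),(1:ℕ))} : Finset (ℕ × ℕ))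
        ⊆ (range (p-1)) ×ˢ (range (p-2)) := by
      intro x hx
      simp only [Finset.mem_insert, Finset.mem_singleton] at hx
      rcases hx with rfl | rfl <;>
        · simp only [Finset.mem_product, Finset.mem_range]
          omega
    rw [← Finset.sum_subset hpair]
    · have hne : ((1:ℕ),(p-5:ℕ)) ≠ ((p-5:ℕ),(1:ℕ)) := by
        intro h
        have := congrArg Prod.fst h
        simp at this
        omega
      rw [Finset.sum_pair hne]
      have d1 : (p-1) ∣ E 1 (p-5) := ⟨2, by simp only [hE]; omega⟩
      have d2 : (p-1) ∣ E (p-5) 1 := ⟨2, by simp only [hE]; omega⟩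
      rw [if_pos d1, if_pos d2]
    · -- vanishing off the pair set
      intro x hx hnx
      obtain ⟨i, k⟩ := x
      simp only [Finset.mem_product, Finset.mem_range] at hx
      simp only [Finset.mem_insert, Finset.mem_singleton, Prod.mk.injEq, not_or, not_and] at hnx
      by_cases hdvd : (p-1) ∣ E i k
      · rw [if_pos hdvd]
        obtain ⟨t, ht⟩ := hdvd
        simp only [hE] at ht
        -- bound t
        rcases t with _ | _ | _ | t
        · omega
        · -- t = 1 : forces i = p-2, k = p-3, and bb p (p-2) = 0
          have hik : i = p-2 ∧ k = p-3 := by omega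
          have hpo : p % 2 = 1 := Nat.odd_iff.mp (hp.odd_of_ne_two (by omega))
          have hodd : Odd (p-2) := Nat.odd_iff.mpr (by omega)
          have hz : bb p (p-2) = 0 := by
            unfold bb phiQ
            rw [bernoulli'_eq_zero_of_odd hodd (by omega)]
            simp
          rw [hik.1]
          simp only [hu]
          rw [hz]
          ring
        · -- t = 2 : i + k = p - 4, odd-index bernoulli vanishes
          have hik : i + k = p - 4 := by omega
          have hpo : p % 2 = 1 := Nat.odd_iff.mp (hp.odd_of_ne_two (by omega))
          have hcases : (i % 2 = 1 ∧ i ≠ 1) ∨ (k % 2 = 1 ∧ k ≠ 1) := by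
            rcases Nat.even_or_odd i with he | ho
            · have hi2 := Nat.even_iff.mp he
              right
              refine ⟨by omega, fun hk1 => (hnx.2 (by omega)) (by omega)⟩
            · have hi2 := Nat.odd_iff.mp ho
              left
              refine ⟨hi2, fun hi1 => (hnx.1 hi1) (by omega)⟩
          rcases hcases with ⟨ho, hne⟩ | ⟨ho, hne⟩
          · have hz : bb p i = 0 := by
              unfold bb phiQ
              rw [bernoulli'_eq_zero_of_odd (Nat.odd_iff.mpr ho) (by omega)]
              simp
            simp only [hu]
            rw [hz]
            ring
          · have hz : bb p k = 0 := by
              unfold bb phiQ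
              rw [bernoulli'_eq_zero_of_odd (Nat.odd_iff.mpr ho) (by omega)]
              simp
            simp only [hv]
            rw [hz]
            ring
        · -- t ≥ 3 : impossible
          exfalso
          have h3 : (p-1) * 3 ≤ (p-1) * (t+1+1+1) := Nat.mul_le_mul (le_refl _) (by omega)
          rw [← ht] at h3
          omega
      · rw [if_neg hdvd]
        ring
  rw [step4]
  -- Step 5 : numerical values
  have h2ne : ((2:ℕ) : ZMod p) ≠ 0 := cast_nat_ne_zero (by omega) (by omega)
  have h6ne : ((6:ℕ) : ZMod p) ≠ 0 := cast_nat_ne_zero (by omega) (by omega)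
  have h24ne : ((24:ℕ) : ZMod p) ≠ 0 := by
    rw [Ne, ZMod.natCast_eq_zero_iff]
    intro h
    have h' := Nat.le_of_dvd (by norm_num) h
    interval_cases p <;> first | (exact absurd hp (by decide)) | (revert h; decide)
  -- bb p 1 = 2⁻¹
  have hbb1 : bb p 1 = (((2:ℕ) : ZMod p))⁻¹ := by
    have hok := Ok.one_div_nat (p := p) (b := 2)
      (fun h => absurd (Nat.le_of_dvd (by norm_num) h) (by omega))
    have harg : (1/((2:ℕ):ℚ)) = (1/2 : ℚ) := by norm_num
    rw [harg] at hok
    unfold bb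
    rw [bernoulli'_one]
    exact hok.phiQ_eq
  -- binomial values
  have hch1 : (((p-1).choose 1 : ℕ) : ZMod p) = -1 := by
    rw [Nat.choose_one_right, cast_sub_nat 1 (by omega)]
    simp
  have hch2 : (((p-2).choose 1 : ℕ) : ZMod p) = -((2:ℕ) : ZMod p) := by
    rw [Nat.choose_one_right, cast_sub_nat 2 (by omega)]
  have hC3 : (((p-2).choose (p-5) : ℕ) : ZMod p) = -4 := by
    have hsymm : (p-2).choose (p-5) = (p-2).choose 3 := by
      rw [show p-5 = (p-2) - 3 from by omega, Nat.choose_symm (by omega)]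
    have hdesc : (p-2).descFactorial 3 = 6 * ((p-2).choose 3) := by
      rw [Nat.descFactorial_eq_factorial_mul_choose]
      norm_num [Nat.factorial]
    have hprod : (p-2).descFactorial 3 = (p-4) * ((p-3) * (p-2)) := by
      rw [show p-4 = p-2-2 from by omega, show p-3 = p-2-1 from by omega]
      simp [Nat.descFactorial_succ, Nat.descFactorial_zero]
    have e1 : (((p-2).descFactorial 3 : ℕ) : ZMod p)
        = ((6:ℕ):ZMod p) * (((p-2).choose 3 : ℕ) : ZMod p) := by
      rw [hdesc]; push_cast; ring
    have e2 : (((p-2).descFactorial 3 : ℕ) : ZMod p) = ((6:ℕ):ZMod p) * (-4) := by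
      rw [hprod, Nat.cast_mul, Nat.cast_mul, cast_sub_nat 4 (by omega),
        cast_sub_nat 3 (by omega), cast_sub_nat 2 (by omega)]
      push_cast
      ring
    rw [hsymm]
    exact mul_left_cancel₀ h6ne (e1.symm.trans e2)
  have hC4 : (((p-1).choose (p-5) : ℕ) : ZMod p) = 1 := by
    have hsymm : (p-1).choose (p-5) = (p-1).choose 4 := by
      rw [show p-5 = (p-1) - 4 from by omega, Nat.choose_symm (by omega)]
    have hdesc : (p-1).descFactorial 4 = 24 * ((p-1).choose 4) := by
      rw [Nat.descFactorial_eq_factorial_mul_choose]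
      norm_num [Nat.factorial]
    have hprod : (p-1).descFactorial 4 = (p-4) * ((p-3) * ((p-2) * (p-1))) := by
      rw [show p-4 = p-1-3 from by omega, show p-3 = p-1-2 from by omega,
        show p-2 = p-1-1 from by omega]
      simp [Nat.descFactorial_succ, Nat.descFactorial_zero]
    have e1 : (((p-1).descFactorial 4 : ℕ) : ZMod p)
        = ((24:ℕ):ZMod p) * (((p-1).choose 4 : ℕ) : ZMod p) := by
      rw [hdesc]; push_cast; ring
    have e2 : (((p-1).descFactorial 4 : ℕ) : ZMod p) = ((24:ℕ):ZMod p) * 1 := by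
      rw [hprod, Nat.cast_mul, Nat.cast_mul, Nat.cast_mul, cast_sub_nat 4 (by omega),
        cast_sub_nat 3 (by omega), cast_sub_nat 2 (by omega), cast_sub_nat 1 (by omega)]
      push_cast
      ring
    rw [hsymm]
    exact mul_left_cancel₀ h24ne (e1.symm.trans e2)
  -- values of the constants
  have hc1v : c₁ = -1 := by
    rw [hc₁, cast_sub_nat 1 (by omega)]
    simp [inv_neg]
  have hc2v : c₂ = (-(((2:ℕ)) : ZMod p))⁻¹ := by
    rw [hc₂, cast_sub_nat 2 (by omega)]
  -- final arithmetic
  simp only [hu, hv]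
  rw [hbb1, hch1, hch2, hC3, hC4, hc1v, hc2v]
  have h2 : ((2:ℕ) : ZMod p) = (2 : ZMod p) := by push_cast; ring
  rw [h2] at *
  have h2' : (2 : ZMod p) ≠ 0 := by rw [← h2]; exact h2ne
  field_simp
  ring


end Solution

theorem stmt5 (p : ℕ) (hp : p.Prime) (h7 : 7 ≤ p) :
    (p : ℤ) ∣ ((∑ j ∈ Finset.Icc 1 (p - 1), hsum 1 j * hsum 2 j / (j : ℚ) ^ 2)
      - (-(1 / 2) * bernoulli (p - 5))).num := by
  haveI : Fact p.Prime := ⟨hp⟩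
  -- Ok-images of harmonic sums
  have okH : ∀ s : ℕ, ∀ j ∈ Icc 1 (p-1),
      Ok p (hsum s j) (∑ m ∈ Icc 1 j, ((((m : ZMod p))^s)⁻¹)) := by
    intro s j hj
    have hj' := Finset.mem_Icc.mp hj
    unfold hsum
    refine Ok.sum fun m hm => ?_
    have hm' := Finset.mem_Icc.mp hm
    have hnd : ¬ p ∣ m^s := by
      intro h
      have h1 := hp.dvd_of_dvd_pow h
      exact absurd (Nat.le_of_dvd (by omega) h1) (by omega)
    have := Ok.one_div_nat (p := p) hnd
    push_cast at this
    exact this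
  have okJ : ∀ j ∈ Icc 1 (p-1),
      Ok p (1 / ((j : ℚ))^2) (((((j : ZMod p)))^2)⁻¹) := by
    intro j hj
    have hj' := Finset.mem_Icc.mp hj
    have hnd : ¬ p ∣ j^2 := by
      intro h
      have h1 := hp.dvd_of_dvd_pow h
      exact absurd (Nat.le_of_dvd (by omega) h1) (by omega)
    have := Ok.one_div_nat (p := p) hnd
    push_cast at this
    exact this
  have okS : Ok p (∑ j ∈ Icc 1 (p-1), hsum 1 j * hsum 2 j / (j : ℚ) ^ 2)
      (∑ j ∈ Icc 1 (p-1), ((∑ m ∈ Icc 1 j, ((((m : ZMod p))^1)⁻¹))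
        * (∑ m ∈ Icc 1 j, ((((m : ZMod p))^2)⁻¹)) * ((((j : ZMod p))^2)⁻¹))) := by
    refine Ok.sum fun j hj => ?_
    have h1 := okH 1 j hj
    have h2 := okH 2 j hj
    have h3 := okJ j hj
    have h4 := (h1.mul h2).mul h3
    have hshape : hsum 1 j * hsum 2 j / ((j:ℚ))^2
        = hsum 1 j * hsum 2 j * (1 / ((j:ℚ))^2) := by ring
    rw [hshape]
    exact h4
  -- Ok-image of the Bernoulli part
  have hb : bernoulli (p-5) = bernoulli' (p-5) :=
    bernoulli_eq_bernoulli'_of_ne_one (by omega)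
  have okHalf : Ok p ((1:ℚ)/2) ((((2:ℕ) : ZMod p))⁻¹) := by
    have hok := Ok.one_div_nat (p := p) (b := 2)
      (fun h => absurd (Nat.le_of_dvd (by norm_num) h) (by omega))
    have harg : (1/((2:ℕ):ℚ)) = (1/2 : ℚ) := by norm_num
    rwa [harg] at hok
  have okB : Ok p (-(1/2) * bernoulli (p-5))
      (-((((2:ℕ) : ZMod p))⁻¹) * bb p (p-5)) := by
    rw [hb]
    exact (okHalf.neg).mul (bernoulli'_ok (p-5) (by omega))
  have okDiff := okS.sub okB
  have hmain := main_zmod (p := p) h7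
  have h2cast : ((2:ℕ) : ZMod p) = (2 : ZMod p) := by push_cast; ring
  have hzero : (∑ j ∈ Icc 1 (p-1), ((∑ m ∈ Icc 1 j, ((((m : ZMod p))^1)⁻¹))
        * (∑ m ∈ Icc 1 j, ((((m : ZMod p))^2)⁻¹)) * ((((j : ZMod p))^2)⁻¹)))
      - (-((((2:ℕ) : ZMod p))⁻¹) * bb p (p-5)) = 0 := by
    rw [hmain, h2cast]
    ring
  rw [hzero] at okDiff
  exact okDiff.dvd_num
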